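/- Let p be a prime. Define ℓ(0) = 0 and, for i ≥ 1, let ℓ(i) be the integer part of log_p(i) (i.e., the largest n with p^n ≤ i). Then for every integer m ≥ 1 and every integer j with 1 ≤ j ≤ p^m − 1, one has ℓ(p^m − j) + ℓ(j) − v_p(j) ≥ m − 1. -/

import Mathlib

theorem stmt9 (p : ℕ) (hp : p.Prime) (m j : ℕ) (hm : 1 ≤ m) (h1 : 1 ≤ j)
    (h2 : j ≤ p ^ m - 1) :
    (m : ℤ) - 1 ≤ (Nat.log p (p ^ m - j) : ℤ) + (Nat.log p j : ℤ) - (padicValNat p j : ℤ) := by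
  have hp1 : 1 < p := hp.one_lt
  have hpm : 1 ≤ p ^ m := Nat.one_le_pow _ _ hp.pos
  have hjlt : j < p ^ m := by omega
  set ℓ := Nat.log p j with hℓdef
  set v := padicValNat p j with hvdef
  have hj0 : j ≠ 0 := by omega
  have hℓ : ℓ < m := Nat.log_lt_of_lt_pow hj0 hjlt
  have hpv : p ^ v ∣ j := pow_padicValNat_dvd
  have hpvle : p ^ v ≤ j := Nat.le_of_dvd (by omega) hpv
  have hvℓ : v ≤ ℓ := (Nat.le_log_iff_pow_le hp1 hj0).mpr hpvle
  have hsub0 : 1 ≤ p ^ m - j := by omega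
  -- key: p ^ (m - 1 - ℓ + v) ≤ p ^ m - j
  have hkey : p ^ (m - 1 - ℓ + v) ≤ p ^ m - j := by
    rcases Nat.lt_or_ge (ℓ + 1) m with hc | hc
    · -- ℓ + 2 ≤ m : p^m - j > p^{m-1} ≥ p^{m-1-ℓ+v}
      have h1' : j < p ^ (ℓ + 1) := Nat.lt_pow_succ_log_self hp1 j
      have h2' : p ^ (ℓ + 1) ≤ p ^ (m - 1) := Nat.pow_le_pow_right hp.pos (by omega)
      have h3' : p ^ (m - 1) * 2 ≤ p ^ (m - 1) * p := Nat.mul_le_mul_left _ hp1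
      have h4' : p ^ (m - 1) * p = p ^ m := by
        rw [← pow_succ]; congr 1; omega
      have h5' : p ^ (m - 1 - ℓ + v) ≤ p ^ (m - 1) :=
        Nat.pow_le_pow_right hp.pos (by omega)
      omega
    · -- ℓ + 1 = m : p^v ∣ p^m - j and it's positive
      have hℓm : ℓ + 1 = m := by omega
      have hdvd : p ^ v ∣ p ^ m - j := by
        apply Nat.dvd_sub
        · exact pow_dvd_pow p (by omega)
        · exact hpv
      have hle : p ^ v ≤ p ^ m - j := Nat.le_of_dvd (by omega) hdvd
      have heq : m - 1 - ℓ + v = v := by omega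
      rw [heq]; exact hle
  have hlog : m - 1 - ℓ + v ≤ Nat.log p (p ^ m - j) :=
    (Nat.le_log_iff_pow_le hp1 (by omega)).mpr hkey
  omega
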